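/- (Alternate representation.) One has 𝓐^uni = ⋂_{(s,f)∈𝓟} 𝓐^{s,f}, and for every (s,f) ∈ 𝓟 and every A ∈ 𝓐^uni, α(A) = α^{s,f}(A). -/

import Mathlib

open MeasureTheory Filter Set Topology

noncomputable section

namespace UPN

/-- The half line `[0,∞)` viewed as a subset of `ℝ`. -/
def Ray : Set ℝ := Set.Ici 0

/-- The indicator function `1_A`. -/
def ind (A : Set ℝ) : ℝ → ℝ := Set.indicator A fun _ => (1 : ℝ)

/-- The collection `𝓜` of countable unions `⋃ᵢ [a_{2i-1}, a_{2i})` for a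
nondecreasing nonnegative sequence `a`. -/
def Mcal : Set (Set ℝ) :=
  {A | ∃ a : ℕ → ℝ, 0 ≤ a 0 ∧ Monotone a ∧
        A = ⋃ i : ℕ, Set.Ico (a (2 * i)) (a (2 * i + 1))}

/-- The density function `ρ_A`: `ρ_A(0) = 0` and `ρ_A(x) = (1/x)∫₀ˣ 1_A(y) dy`. -/
def rho (A : Set ℝ) (x : ℝ) : ℝ :=
  if x = 0 then 0 else (1 / x) * ∫ y in (0:ℝ)..x, ind A y

/-- The collection `𝓒` of elements of `𝓜` having natural density. -/
def Ccal : Set (Set ℝ) :=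
  {A | A ∈ Mcal ∧ ∃ l : ℝ, Tendsto (rho A) atTop (𝓝 l)}

/-- The natural density `λ(A) = lim_{x→∞} ρ_A(x)`. -/
def lam (A : Set ℝ) : ℝ := limUnder atTop (rho A)

/-- `S_A(x) = m(A ∩ [0,x))`. -/
def Sfn (A : Set ℝ) (x : ℝ) : ℝ := (volume (A ∩ Set.Ico 0 x)).toReal

/-- The thinning operation `A ∘ B = {x : x ∈ A ∧ S_A(x) ∈ B}`. -/
def thin (A B : Set ℝ) : Set ℝ := {x | x ∈ A ∧ Sfn A x ∈ B}

/-- An f-system on `[0,∞)`: a nonempty collection of subsets of `[0,∞)` closed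
under complements (in `[0,∞)`) and finite disjoint unions. -/
structure IsFSystem (F : Set (Set ℝ)) : Prop where
  nonempty : F.Nonempty
  subset_ray : ∀ A ∈ F, A ⊆ Ray
  compl_mem : ∀ A ∈ F, Ray \ A ∈ F
  union_mem : ∀ A ∈ F, ∀ B ∈ F, A ∩ B = ∅ → A ∪ B ∈ F

/-- A probability pair `(F, μ)` on `[0,∞)`: `F` is an f-system and `μ` is a finitely
additive probability measure on `F` with values in `[0,1]` and `μ([0,∞)) = 1`. -/
structure IsProbPair (F : Set (Set ℝ)) (μ : Set ℝ → ℝ) : Prop where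
  fsystem : IsFSystem F
  nonneg : ∀ A ∈ F, 0 ≤ μ A
  le_one : ∀ A ∈ F, μ A ≤ 1
  ray_eq_one : μ Ray = 1
  additive : ∀ A ∈ F, ∀ B ∈ F, A ∩ B = ∅ → μ (A ∪ B) = μ A + μ B

/-- A weakly thinnable pair (WTP). -/
structure IsWTP (F : Set (Set ℝ)) (μ : Set ℝ → ℝ) : Prop where
  pair : IsProbPair F μ
  Ccal_subset : Ccal ⊆ F
  subset_Mcal : F ⊆ Mcal
  P1 : ∀ C ∈ Ccal, ∀ A ∈ F, thin C A ∈ F ∧ μ (thin C A) = μ C * μ A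
  P2 : ∀ A ∈ F, ∀ B ∈ F, (∀ x : ℝ, Sfn B x ≤ Sfn A x) → μ B ≤ μ A
  P3 : ∀ c : ℝ, 0 ≤ c → μ (Set.Ici c) = 1

/-- Coherence of a probability measure `μ` on an f-system `F` on `[0,∞)`. -/
def Coherent (F : Set (Set ℝ)) (μ : Set ℝ → ℝ) : Prop :=
  ∀ (n : ℕ) (a : Fin n → ℝ) (A : Fin n → Set ℝ), (∀ i, A i ∈ F) →
    0 ≤ ⨆ x : Ray, ∑ i, a i * (ind (A i) ↑x - μ (A i))

/-- `σ_A(D,x) = (1/D) ∫_x^{x+D} 1_A(y) dy`. -/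
def sigmaFn (A : Set ℝ) (D x : ℝ) : ℝ := (1 / D) * ∫ y in x..(x + D), ind A y

/-- `U(A) = limsup_{D→∞} sup_{x>0} σ_A(D,x)`. -/
def Ufn (A : Set ℝ) : ℝ :=
  limsup (fun D => ⨆ x : Set.Ioi (0:ℝ), sigmaFn A D ↑x) atTop

/-- `L(A) = liminf_{D→∞} inf_{x>0} σ_A(D,x)`. -/
def Lfn (A : Set ℝ) : ℝ :=
  liminf (fun D => ⨅ x : Set.Ioi (0:ℝ), sigmaFn A D ↑x) atTop

/-- `𝓦^uni = {A ∈ 𝓜 : L(A) = U(A)}`. -/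
def Wuni : Set (Set ℝ) := {A | A ∈ Mcal ∧ Lfn A = Ufn A}

/-- `log(A) = {log a : a ∈ A ∩ [1,∞)}`. -/
def logSet (A : Set ℝ) : Set ℝ := Real.log '' (A ∩ Set.Ici 1)

/-- `𝓐^uni = {A ∈ 𝓜 : log(A) ∈ 𝓦^uni}`. -/
def Auni : Set (Set ℝ) := {A | A ∈ Mcal ∧ logSet A ∈ Wuni}

/-- `α(A) = λ(log(A))`. -/
def alphaFn (A : Set ℝ) : ℝ := lam (logSet A)

/-- `ξ_A(D,x) = (1/log D) ∫_x^{Dx} ρ_A(y)/y dy`. -/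
def xi (A : Set ℝ) (D x : ℝ) : ℝ :=
  (1 / Real.log D) * ∫ y in x..(D * x), rho A y / y

/-- Membership in `𝓟`: `s` is a sequence in `(1,∞)` tending to `∞` and `f` is a
sequence in `(1,∞)`. -/
def memP (s f : ℕ → ℝ) : Prop :=
  (∀ n, 1 < s n) ∧ Tendsto s atTop atTop ∧ ∀ n, 1 < f n

/-- `𝓐^{s,f} = {A ∈ 𝓜 : lim_n ξ_A(s_n,f_n) exists}`. -/
def Asf (s f : ℕ → ℝ) : Set (Set ℝ) :=
  {A | A ∈ Mcal ∧ ∃ l : ℝ, Tendsto (fun n => xi A (s n) (f n)) atTop (𝓝 l)}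

/-- `α^{s,f}(A) = lim_n ξ_A(s_n,f_n)`. -/
def alphasf (s f : ℕ → ℝ) (A : Set ℝ) : ℝ :=
  limUnder atTop fun n => xi A (s n) (f n)

/-- `τ_A(C,j)`; here `j : ℕ` starting from `0` corresponds to the interval
`[C^j, C^{j+1})`, i.e. to the paper's `τ_A(C, j+1)`. -/
def tau (A : Set ℝ) (C : ℝ) (j : ℕ) : ℝ :=
  (1 / (C ^ j * (C - 1))) * ∫ y in (C ^ j : ℝ)..(C ^ (j + 1)), ind A y

/-- `U^*(C,A) = limsup_{n→∞} sup_k (1/n) Σ_{j=k}^{k+n-1} τ_A(C,j)`. -/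
def Ustar (C : ℝ) (A : Set ℝ) : ℝ :=
  limsup (fun n : ℕ => ⨆ k : ℕ, (1 / (n : ℝ)) * ∑ i ∈ Finset.range n, tau A C (k + i)) atTop
section Aux

lemma measurableSet_of_mem {A : Set ℝ} (hA : A ∈ Mcal) : MeasurableSet A := by
  obtain ⟨a, -, -, rfl⟩ := hA
  exact MeasurableSet.iUnion fun i => measurableSet_Ico

lemma ind_nonneg (A : Set ℝ) (x : ℝ) : 0 ≤ ind A x := by
  unfold ind; by_cases h : x ∈ A <;> simp [h]

lemma ind_le_one (A : Set ℝ) (x : ℝ) : ind A x ≤ 1 := by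
  unfold ind; by_cases h : x ∈ A <;> simp [h]

lemma ind_measurable {A : Set ℝ} (hA : A ∈ Mcal) : Measurable (ind A) :=
  measurable_const.indicator (measurableSet_of_mem hA)

lemma ind_intervalIntegrable {A : Set ℝ} (hA : A ∈ Mcal) (a b : ℝ) :
    IntervalIntegrable (ind A) volume a b := by
  rw [intervalIntegrable_iff]
  have hc : IntegrableOn (fun _ : ℝ => (1:ℝ)) (Set.uIoc a b) volume := by
    have := (intervalIntegrable_const (μ := volume) (a := a) (b := b) (c := (1:ℝ)))
    rwa [intervalIntegrable_iff] at this
  refine Integrable.mono' hc ((ind_measurable hA).aestronglyMeasurable.restrict) ?_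
  filter_upwards with x
  rw [Real.norm_eq_abs, abs_of_nonneg (ind_nonneg A x)]
  exact ind_le_one A x

lemma integral_ind_nonneg {A : Set ℝ} {a b : ℝ} (hab : a ≤ b) : 0 ≤ ∫ y in a..b, ind A y :=
  intervalIntegral.integral_nonneg hab fun u _ => ind_nonneg A u

lemma integral_ind_le {A : Set ℝ} (hA : A ∈ Mcal) {a b : ℝ} (hab : a ≤ b) :
    (∫ y in a..b, ind A y) ≤ b - a := by
  have h : (∫ y in a..b, ind A y) ≤ ∫ _ in a..b, (1:ℝ) :=
    intervalIntegral.integral_mono_on hab (ind_intervalIntegrable hA a b)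
      intervalIntegrable_const fun x _ => ind_le_one A x
  simpa using h

lemma locally_const_right {A : Set ℝ} (hA : A ∈ Mcal) (u : ℝ) :
    ∃ δ > 0, ∀ x, u ≤ x → x < u + δ → (x ∈ A ↔ u ∈ A) := by
  classical
  obtain ⟨a, -, hmono, rfl⟩ := hA
  by_cases h : ∃ j, u < a j
  · have hj0u : u < a (Nat.find h) := Nat.find_spec h
    have hmin : ∀ j, u < a j → a (Nat.find h) ≤ a j := by
      intro j hj
      rcases le_or_gt (Nat.find h) j with hle | hlt
      · exact hmono hle
      · exact absurd hj (Nat.find_min h hlt)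
    refine ⟨a (Nat.find h) - u, by linarith, fun x hux hxlt => ?_⟩
    have hx : x < a (Nat.find h) := by linarith
    simp only [Set.mem_iUnion, Set.mem_Ico]
    constructor
    · rintro ⟨i, h1, h2⟩
      refine ⟨i, ?_, lt_of_le_of_lt hux h2⟩
      by_contra hc
      push_neg at hc
      have := hmin _ hc
      linarith
    · rintro ⟨i, h1, h2⟩
      exact ⟨i, le_trans h1 hux, hx.trans_le (hmin _ h2)⟩
  · push_neg at h
    refine ⟨1, one_pos, fun x hux _ => ?_⟩
    simp only [Set.mem_iUnion, Set.mem_Ico]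
    constructor
    · rintro ⟨i, h1, h2⟩
      exact absurd h2 (not_lt.2 ((h _).trans hux))
    · rintro ⟨i, h1, h2⟩
      exact absurd h2 (not_lt.2 (h _))

lemma ind_cwa {A : Set ℝ} (hA : A ∈ Mcal) (u : ℝ) :
    ContinuousWithinAt (ind A) (Set.Ici u) u := by
  obtain ⟨δ, hδ, hconst⟩ := locally_const_right hA u
  have hev : ind A =ᶠ[𝓝[Set.Ici u] u] fun _ => ind A u := by
    filter_upwards [Ico_mem_nhdsGE_of_mem (Set.left_mem_Ico.2 (by linarith : u < u + δ))]
      with x hx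
    unfold ind
    by_cases hu : u ∈ A
    · rw [Set.indicator_of_mem ((hconst x hx.1 hx.2).2 hu) , Set.indicator_of_mem hu]
    · rw [Set.indicator_of_notMem (fun hxA => hu ((hconst x hx.1 hx.2).1 hxA)),
        Set.indicator_of_notMem hu]
  exact (continuousWithinAt_const).congr_of_eventuallyEq hev rfl

lemma mem_logSet_iff {A : Set ℝ} {t : ℝ} (ht : 0 ≤ t) :
    t ∈ logSet A ↔ Real.exp t ∈ A := by
  constructor
  · rintro ⟨z, ⟨hzA, hz1⟩, rfl⟩
    rwa [Real.exp_log (lt_of_lt_of_le one_pos hz1)]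
  · intro h
    exact ⟨Real.exp t, ⟨h, Real.one_le_exp ht⟩, Real.log_exp t⟩

lemma ind_logSet_eq {A : Set ℝ} {t : ℝ} (ht : 0 ≤ t) :
    ind (logSet A) t = ind A (Real.exp t) := by
  unfold ind
  by_cases h : Real.exp t ∈ A
  · rw [Set.indicator_of_mem ((mem_logSet_iff ht).2 h), Set.indicator_of_mem h]
  · rw [Set.indicator_of_notMem (fun hc => h ((mem_logSet_iff ht).1 hc)),
      Set.indicator_of_notMem h]

lemma log_image_Ico_inter {p q : ℝ} :
    Real.log '' (Set.Ico p q ∩ Set.Ici 1)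
      = Set.Ico (Real.log (max p 1)) (Real.log (max q 1)) := by
  ext y
  simp only [Set.mem_image, Set.mem_inter_iff, Set.mem_Ico, Set.mem_Ici]
  constructor
  · rintro ⟨z, ⟨⟨hpz, hzq⟩, h1z⟩, rfl⟩
    have hz0 : (0:ℝ) < z := by linarith
    refine ⟨Real.log_le_log (by positivity) (max_le hpz h1z), ?_⟩
    have hq : max q 1 = q := max_eq_left (by linarith)
    rw [hq]
    exact Real.log_lt_log hz0 hzq
  · rintro ⟨h1, h2⟩
    have hy0 : 0 ≤ y := le_trans (Real.log_nonneg (le_max_right p 1)) h1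
    have h1e : (1:ℝ) ≤ Real.exp y := Real.one_le_exp hy0
    have hlt : Real.exp y < max q 1 := by
      have h := Real.exp_lt_exp.2 h2
      rwa [Real.exp_log (lt_of_lt_of_le one_pos (le_max_right q 1))] at h
    have hge : max p 1 ≤ Real.exp y := by
      have h := Real.exp_le_exp.2 h1
      rwa [Real.exp_log (lt_of_lt_of_le one_pos (le_max_right p 1))] at h
    refine ⟨Real.exp y, ⟨⟨le_trans (le_max_left p 1) hge, ?_⟩, h1e⟩, Real.log_exp y⟩
    rcases le_or_gt q 1 with hq | hq
    · exfalso
      have : Real.exp y < 1 := lt_of_lt_of_le hlt (max_le hq le_rfl)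
      linarith
    · rwa [max_eq_left hq.le] at hlt

lemma logSet_mem_Mcal {A : Set ℝ} (hA : A ∈ Mcal) : logSet A ∈ Mcal := by
  obtain ⟨a, -, hmono, rfl⟩ := hA
  refine ⟨fun i => Real.log (max (a i) 1), Real.log_nonneg (le_max_right _ _),
    fun i j hij => Real.log_le_log (lt_of_lt_of_le one_pos (le_max_right _ _))
      (max_le_max (hmono hij) le_rfl), ?_⟩
  unfold logSet
  rw [Set.iUnion_inter, Set.image_iUnion]
  exact Set.iUnion_congr fun i => log_image_Ico_inter

end Aux
section Aux2

lemma rho_eq {A : Set ℝ} {x : ℝ} (hx : x ≠ 0) :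
    rho A x = (1/x) * ∫ y in (0:ℝ)..x, ind A y := if_neg hx

lemma rho_nonneg {A : Set ℝ} {x : ℝ} (hx : 0 ≤ x) : 0 ≤ rho A x := by
  rcases eq_or_lt_of_le hx with h | h
  · simp [rho, ← h]
  · rw [rho_eq h.ne']
    exact mul_nonneg (by positivity) (integral_ind_nonneg h.le)

lemma rho_le_one {A : Set ℝ} (hA : A ∈ Mcal) {x : ℝ} (hx : 0 ≤ x) : rho A x ≤ 1 := by
  rcases eq_or_lt_of_le hx with h | h
  · simp [rho, ← h]
  · rw [rho_eq h.ne']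
    have hle := integral_ind_le hA h.le (a := 0) (b := x)
    calc (1/x) * ∫ y in (0:ℝ)..x, ind A y ≤ (1/x) * x := by
          apply mul_le_mul_of_nonneg_left (by linarith) (by positivity)
      _ = 1 := by field_simp

lemma continuousOn_rho {A : Set ℝ} (hA : A ∈ Mcal) :
    ContinuousOn (rho A) (Set.Ioi 0) := by
  have hprim : Continuous fun x : ℝ => ∫ y in (0:ℝ)..x, ind A y :=
    intervalIntegral.continuous_primitive (fun a b => ind_intervalIntegrable hA a b) 0
  have h : ContinuousOn (fun x : ℝ => (1/x) * ∫ y in (0:ℝ)..x, ind A y) (Set.Ioi 0) :=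
    (continuousOn_const.div continuousOn_id fun x hx => ne_of_gt hx).mul hprim.continuousOn
  exact h.congr fun x hx => rho_eq (ne_of_gt hx)

lemma exp_image_Ioc {u : ℝ} (hu : 0 ≤ u) :
    Real.exp '' Set.Ioc 0 u = Set.Ioc 1 (Real.exp u) := by
  ext y
  simp only [Set.mem_image, Set.mem_Ioc]
  constructor
  · rintro ⟨x, ⟨hx0, hxu⟩, rfl⟩
    constructor
    · have := Real.exp_lt_exp.2 hx0
      rwa [Real.exp_zero] at this
    · exact Real.exp_le_exp.2 hxu
  · rintro ⟨h1, h2⟩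
    refine ⟨Real.log y, ⟨Real.log_pos h1, ?_⟩, Real.exp_log (by linarith)⟩
    rw [← Real.log_exp u]
    exact Real.log_le_log (by linarith) h2

lemma primitive_split {A : Set ℝ} (hA : A ∈ Mcal) {u : ℝ} (hu : 0 ≤ u) :
    (∫ y in (0:ℝ)..Real.exp u, ind A y)
      = (∫ y in (0:ℝ)..1, ind A y) + ∫ t in (0:ℝ)..u, Real.exp t * ind (logSet A) t := by
  have h1e : (1:ℝ) ≤ Real.exp u := Real.one_le_exp hu
  have hsplit : (∫ y in (0:ℝ)..1, ind A y) + (∫ y in (1:ℝ)..Real.exp u, ind A y)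
      = ∫ y in (0:ℝ)..Real.exp u, ind A y :=
    intervalIntegral.integral_add_adjacent_intervals (ind_intervalIntegrable hA 0 1)
      (ind_intervalIntegrable hA 1 _)
  rw [← hsplit]
  congr 1
  have hchg := MeasureTheory.integral_image_eq_integral_abs_deriv_smul (s := Set.Ioc 0 u)
      (f := Real.exp) (f' := Real.exp) measurableSet_Ioc
      (fun x _ => (Real.hasDerivAt_exp x).hasDerivWithinAt) (Real.exp_injective.injOn) (ind A)
  rw [exp_image_Ioc hu] at hchg
  rw [intervalIntegral.integral_of_le h1e, hchg, intervalIntegral.integral_of_le hu]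
  apply MeasureTheory.setIntegral_congr_fun measurableSet_Ioc
  intro x hx
  simp only [smul_eq_mul]
  rw [abs_of_pos (Real.exp_pos x), ind_logSet_eq (le_of_lt hx.1)]

end Aux2
section Aux3

/-- auxiliary primitive -/
def Kf (A : Set ℝ) (u : ℝ) : ℝ := ∫ t in (0:ℝ)..u, Real.exp t * ind (logSet A) t

/-- auxiliary smooth version of the indicator of `log A` -/
def gf (A : Set ℝ) (u : ℝ) : ℝ := Real.exp (-u) * ((∫ y in (0:ℝ)..1, ind A y) + Kf A u)

lemma expInd_intervalIntegrable {A : Set ℝ} (hA : A ∈ Mcal) (a b : ℝ) :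
    IntervalIntegrable (fun t => Real.exp t * ind (logSet A) t) volume a b :=
  (ind_intervalIntegrable (logSet_mem_Mcal hA) a b).continuousOn_mul
    Real.continuous_exp.continuousOn

lemma continuous_Kf {A : Set ℝ} (hA : A ∈ Mcal) : Continuous (Kf A) :=
  intervalIntegral.continuous_primitive (fun a b => expInd_intervalIntegrable hA a b) 0

lemma continuous_gf {A : Set ℝ} (hA : A ∈ Mcal) : Continuous (gf A) :=
  ((Real.continuous_exp.comp continuous_neg).mul (continuous_const.add (continuous_Kf hA)))

lemma gf_eq_rho {A : Set ℝ} (hA : A ∈ Mcal) {u : ℝ} (hu : 0 ≤ u) :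
    gf A u = rho A (Real.exp u) := by
  rw [rho_eq (Real.exp_ne_zero u), primitive_split hA hu]
  unfold gf Kf
  rw [one_div, ← Real.exp_neg]

lemma gf_nonneg {A : Set ℝ} (hA : A ∈ Mcal) {u : ℝ} (hu : 0 ≤ u) : 0 ≤ gf A u := by
  rw [gf_eq_rho hA hu]; exact rho_nonneg (Real.exp_pos u).le

lemma gf_le_one {A : Set ℝ} (hA : A ∈ Mcal) {u : ℝ} (hu : 0 ≤ u) : gf A u ≤ 1 := by
  rw [gf_eq_rho hA hu]; exact rho_le_one hA (Real.exp_pos u).le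

lemma gf_hasDeriv {A : Set ℝ} (hA : A ∈ Mcal) (u : ℝ) :
    HasDerivWithinAt (gf A) (ind (logSet A) u - gf A u) (Set.Ioi u) u := by
  have hB := logSet_mem_Mcal hA
  have hK : HasDerivWithinAt (Kf A) (Real.exp u * ind (logSet A) u) (Set.Ici u) u := by
    refine intervalIntegral.integral_hasDerivWithinAt_right (s := Set.Ici u) (t := Set.Ioi u)
      (expInd_intervalIntegrable hA 0 u) ⟨Set.univ, Filter.univ_mem, ?_⟩ ?_
    · exact ((Real.continuous_exp.measurable.mul (ind_measurable hB)).aestronglyMeasurable).restrict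
    · exact ((Real.continuous_exp.continuousWithinAt).mul (ind_cwa hB u)).mono
        Set.Ioi_subset_Ici_self
  have hexp : HasDerivWithinAt (fun v : ℝ => Real.exp (-v)) (-Real.exp (-u)) (Set.Ici u) u := by
    have h := ((Real.hasDerivAt_exp (-u)).comp u (hasDerivAt_neg u))
    simpa [mul_neg_one, Function.comp_def] using h.hasDerivWithinAt
  have hmul := hexp.mul ((hasDerivWithinAt_const u (Set.Ici u) (∫ y in (0:ℝ)..1, ind A y)).add hK)
  have h1 : Real.exp (-u) * Real.exp u = 1 := by rw [← Real.exp_add]; simp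
  have heq : (-Real.exp (-u)) * ((∫ y in (0:ℝ)..1, ind A y) + Kf A u)
      + Real.exp (-u) * (0 + Real.exp u * ind (logSet A) u) = ind (logSet A) u - gf A u := by
    unfold gf
    linear_combination (ind (logSet A) u) * h1
  exact (heq ▸ hmul).mono Set.Ioi_subset_Ici_self

lemma window_eq {A : Set ℝ} (hA : A ∈ Mcal) {a b : ℝ} (hab : a ≤ b) :
    (∫ u in a..b, ind (logSet A) u) = (∫ u in a..b, gf A u) + (gf A b - gf A a) := by
  have hB := logSet_mem_Mcal hA
  have hftc : ∫ u in a..b, (ind (logSet A) u - gf A u) = gf A b - gf A a :=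
    intervalIntegral.integral_eq_sub_of_hasDeriv_right_of_le hab
      ((continuous_gf hA).continuousOn) (fun x _ => gf_hasDeriv hA x)
      ((ind_intervalIntegrable hB a b).sub ((continuous_gf hA).intervalIntegrable a b))
  rw [intervalIntegral.integral_sub (ind_intervalIntegrable hB a b)
    ((continuous_gf hA).intervalIntegrable a b)] at hftc
  linarith

lemma xi_eq {A : Set ℝ} (hA : A ∈ Mcal) {D x : ℝ} (hD : 1 < D) (hx : 1 < x) :
    xi A D x = (1 / Real.log D) * ∫ u in Real.log x..(Real.log x + Real.log D), gf A u := by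
  have hx0 : (0:ℝ) < x := by linarith
  have hD0 : (0:ℝ) < D := by linarith
  have hDx0 : (0:ℝ) < D * x := by positivity
  have hlogx : 0 < Real.log x := Real.log_pos hx
  have hlogmul : Real.log (D * x) = Real.log x + Real.log D := by
    rw [Real.log_mul (ne_of_gt hD0) (ne_of_gt hx0)]; ring
  have hle : Real.log x ≤ Real.log (D * x) := by
    have := Real.log_pos hD; rw [hlogmul]; linarith
  have hsub := intervalIntegral.integral_comp_smul_deriv' (a := Real.log x)
      (b := Real.log (D * x)) (f := Real.exp) (f' := Real.exp) (g := fun y => rho A y / y)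
      (fun t _ => Real.hasDerivAt_exp t) Real.continuous_exp.continuousOn
      (((continuousOn_rho hA).div continuousOn_id fun y hy => ne_of_gt hy).mono ?_)
  · rw [Real.exp_log hx0, Real.exp_log hDx0] at hsub
    have hcongr : (∫ t in Real.log x..Real.log (D * x),
          Real.exp t • ((fun y => rho A y / y) ∘ Real.exp) t)
        = ∫ t in Real.log x..Real.log (D * x), gf A t := by
      apply intervalIntegral.integral_congr
      intro t ht
      rw [Set.uIcc_of_le hle, Set.mem_Icc] at ht
      have ht0 : 0 ≤ t := le_trans hlogx.le ht.1
      show Real.exp t • (rho A (Real.exp t) / Real.exp t) = gf A t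
      rw [smul_eq_mul, mul_comm, div_mul_cancel₀ _ (Real.exp_ne_zero t)]
      exact (gf_eq_rho hA ht0).symm
    rw [hcongr] at hsub
    unfold xi
    rw [← hsub, hlogmul]
  · rintro y ⟨t, -, rfl⟩
    exact Real.exp_pos t

lemma sigma_nonneg {B : Set ℝ} {T y : ℝ} (hT : 0 < T) : 0 ≤ sigmaFn B T y := by
  unfold sigmaFn
  exact mul_nonneg (by positivity) (integral_ind_nonneg (by linarith))

lemma sigma_le_one {B : Set ℝ} (hB : B ∈ Mcal) {T y : ℝ} (hT : 0 < T) :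
    sigmaFn B T y ≤ 1 := by
  unfold sigmaFn
  have hle := integral_ind_le hB (by linarith : y ≤ y + T) (A := B)
  calc (1/T) * ∫ u in y..(y+T), ind B u ≤ (1/T) * T := by
        apply mul_le_mul_of_nonneg_left (by linarith) (by positivity)
    _ = 1 := by field_simp

lemma sigma_sub_psi {A : Set ℝ} (hA : A ∈ Mcal) {T y : ℝ} (hT : 0 < T) (hy : 0 ≤ y) :
    |sigmaFn (logSet A) T y - (1/T) * ∫ u in y..(y+T), gf A u| ≤ 2 / T := by
  unfold sigmaFn
  rw [window_eq hA (by linarith : y ≤ y + T)]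
  have hbd : |gf A (y + T) - gf A y| ≤ 2 := by
    have h1 := gf_nonneg hA hy
    have h2 := gf_le_one hA hy
    have h3 := gf_nonneg hA (by linarith : (0:ℝ) ≤ y + T)
    have h4 := gf_le_one hA (by linarith : (0:ℝ) ≤ y + T)
    rw [abs_le]; constructor <;> linarith
  have heq : (1/T) * ((∫ u in y..(y+T), gf A u) + (gf A (y+T) - gf A y))
      - (1/T) * ∫ u in y..(y+T), gf A u = (1/T) * (gf A (y+T) - gf A y) := by ring
  rw [heq, abs_mul, abs_of_pos (by positivity : (0:ℝ) < 1/T)]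
  calc (1/T) * |gf A (y+T) - gf A y| ≤ (1/T) * 2 :=
        mul_le_mul_of_nonneg_left hbd (by positivity)
    _ = 2 / T := by ring

end Aux3
section Aux4

instance : Nonempty (Set.Ioi (0:ℝ)) := ⟨⟨1, by norm_num⟩⟩

lemma sup_sigma_bdd {B : Set ℝ} (hB : B ∈ Mcal) {T : ℝ} (hT : 0 < T) :
    BddAbove (Set.range fun x : Set.Ioi (0:ℝ) => sigmaFn B T ↑x) := by
  refine ⟨1, ?_⟩
  rintro v ⟨x, rfl⟩
  exact sigma_le_one hB hT

lemma inf_sigma_bdd {B : Set ℝ} {T : ℝ} (hT : 0 < T) :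
    BddBelow (Set.range fun x : Set.Ioi (0:ℝ) => sigmaFn B T ↑x) := by
  refine ⟨0, ?_⟩
  rintro v ⟨x, rfl⟩
  exact sigma_nonneg hT

lemma sup_sigma_le_one {B : Set ℝ} (hB : B ∈ Mcal) {T : ℝ} (hT : 0 < T) :
    (⨆ x : Set.Ioi (0:ℝ), sigmaFn B T ↑x) ≤ 1 :=
  ciSup_le fun _ => sigma_le_one hB hT

lemma inf_sigma_nonneg {B : Set ℝ} {T : ℝ} (hT : 0 < T) :
    0 ≤ ⨅ x : Set.Ioi (0:ℝ), sigmaFn B T ↑x :=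
  le_ciInf fun _ => sigma_nonneg hT

lemma le_sup_sigma {B : Set ℝ} (hB : B ∈ Mcal) {T : ℝ} (hT : 0 < T) (y : Set.Ioi (0:ℝ)) :
    sigmaFn B T ↑y ≤ ⨆ x : Set.Ioi (0:ℝ), sigmaFn B T ↑x :=
  le_ciSup (sup_sigma_bdd hB hT) y

lemma inf_le_sigma {B : Set ℝ} {T : ℝ} (hT : 0 < T) (y : Set.Ioi (0:ℝ)) :
    (⨅ x : Set.Ioi (0:ℝ), sigmaFn B T ↑x) ≤ sigmaFn B T ↑y :=
  ciInf_le (inf_sigma_bdd hT) y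

lemma sigma_unif {A : Set ℝ} (hA : A ∈ Auni) {ε : ℝ} (hε : 0 < ε) :
    ∃ T0 : ℝ, 1 ≤ T0 ∧ ∀ T, T0 ≤ T → ∀ y : ℝ, 0 < y →
      |sigmaFn (logSet A) T y - Ufn (logSet A)| ≤ ε := by
  obtain ⟨hM, hBM, hLU⟩ := hA
  have hev_le : ∀ᶠ T in (atTop : Filter ℝ),
      (⨆ x : Set.Ioi (0:ℝ), sigmaFn (logSet A) T ↑x) ≤ 1 := by
    filter_upwards [eventually_gt_atTop (0:ℝ)] with T hT
    exact sup_sigma_le_one hBM hT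
  have hev_ge : ∀ᶠ T in (atTop : Filter ℝ),
      (0:ℝ) ≤ ⨅ x : Set.Ioi (0:ℝ), sigmaFn (logSet A) T ↑x := by
    filter_upwards [eventually_gt_atTop (0:ℝ)] with T hT
    exact inf_sigma_nonneg hT
  have h1 : ∀ᶠ T in (atTop : Filter ℝ),
      (⨆ x : Set.Ioi (0:ℝ), sigmaFn (logSet A) T ↑x) < Ufn (logSet A) + ε := by
    apply eventually_lt_of_limsup_lt _ (isBoundedUnder_of_eventually_le hev_le)
    have : limsup (fun T => ⨆ x : Set.Ioi (0:ℝ), sigmaFn (logSet A) T ↑x) atTop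
        = Ufn (logSet A) := rfl
    rw [this]; linarith
  have h2 : ∀ᶠ T in (atTop : Filter ℝ),
      Ufn (logSet A) - ε < ⨅ x : Set.Ioi (0:ℝ), sigmaFn (logSet A) T ↑x := by
    apply eventually_lt_of_lt_liminf _ (isBoundedUnder_of_eventually_ge hev_ge)
    have : liminf (fun T => ⨅ x : Set.Ioi (0:ℝ), sigmaFn (logSet A) T ↑x) atTop
        = Lfn (logSet A) := rfl
    rw [this, hLU]; linarith
  obtain ⟨T1, hT1⟩ := eventually_atTop.1 ((h1.and h2).and (eventually_gt_atTop (0:ℝ)))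
  refine ⟨max T1 1, le_max_right _ _, fun T hT y hy => ?_⟩
  obtain ⟨⟨hs, hi⟩, hTpos⟩ := hT1 T (le_trans (le_max_left _ _) hT)
  have hle := le_sup_sigma hBM hTpos ⟨y, hy⟩
  have hge := inf_le_sigma (B := logSet A) hTpos ⟨y, hy⟩
  rw [abs_le]
  constructor <;> simp only [Set.mem_Ioi] at hle hge <;> [linarith; linarith]

lemma abs_Ufn_le {A : Set ℝ} (hA : A ∈ Auni) : |Ufn (logSet A)| ≤ 2 := by
  obtain ⟨T0, hT01, hT0⟩ := sigma_unif hA one_pos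
  have h := hT0 T0 le_rfl 1 one_pos
  have hTpos : (0:ℝ) < T0 := by linarith
  have h1 := sigma_nonneg (B := logSet A) (y := 1) hTpos
  have h2 := sigma_le_one hA.2.1 (y := (1:ℝ)) hTpos
  rw [abs_le] at h ⊢
  constructor <;> linarith [h.1, h.2]

lemma rho_tendsto {A : Set ℝ} (hA : A ∈ Auni) :
    Tendsto (rho (logSet A)) atTop (𝓝 (Ufn (logSet A))) := by
  have hBM : logSet A ∈ Mcal := hA.2.1
  have hc := abs_Ufn_le hA
  rw [Metric.tendsto_atTop]
  intro ε hε
  obtain ⟨T0, hT01, hT0⟩ := sigma_unif hA (show 0 < ε/4 by linarith)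
  refine ⟨max (T0 + 1) (12/ε) + 1, fun x hx => ?_⟩
  have hx1 : T0 + 1 ≤ x := by
    have := le_max_left (T0+1) (12/ε); linarith
  have hx2 : 12/ε ≤ x := by
    have := le_max_right (T0+1) (12/ε); linarith
  have hxgt1 : (1:ℝ) < x := by linarith
  have hx0 : (0:ℝ) < x := by linarith
  set I01 := ∫ y in (0:ℝ)..1, ind (logSet A) y with hI01def
  set σ := sigmaFn (logSet A) (x-1) 1 with hσdef
  have hint : (∫ y in (1:ℝ)..x, ind (logSet A) y) = (x-1) * σ := by
    rw [hσdef]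
    unfold sigmaFn
    rw [show (1:ℝ) + (x-1) = x by ring]
    field_simp
    rw [mul_div_assoc, div_self (by linarith : x - 1 ≠ 0), mul_one]
  have hrho : rho (logSet A) x = (1/x) * (I01 + (x-1) * σ) := by
    rw [rho_eq (ne_of_gt hx0), ← intervalIntegral.integral_add_adjacent_intervals
      (ind_intervalIntegrable hBM 0 1) (ind_intervalIntegrable hBM 1 x), hint]
  have hσc : |σ - Ufn (logSet A)| ≤ ε/4 := hT0 (x-1) (by linarith) 1 one_pos
  have hI1 : 0 ≤ I01 := integral_ind_nonneg zero_le_one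
  have hI2 : I01 ≤ 1 := by
    have := integral_ind_le hBM (zero_le_one) (A := logSet A)
    linarith
  have key : rho (logSet A) x - Ufn (logSet A)
      = (1/x) * ((I01 - Ufn (logSet A)) + (x-1) * (σ - Ufn (logSet A))) := by
    rw [hrho]
    field_simp
    ring
  rw [Real.dist_eq, key, abs_mul, abs_of_pos (by positivity : (0:ℝ) < 1/x)]
  have habs : |(I01 - Ufn (logSet A)) + (x-1) * (σ - Ufn (logSet A))|
      ≤ 3 + (x-1) * (ε/4) := by
    calc |(I01 - Ufn (logSet A)) + (x-1) * (σ - Ufn (logSet A))|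
        ≤ |I01 - Ufn (logSet A)| + |(x-1) * (σ - Ufn (logSet A))| := abs_add_le _ _
      _ ≤ 3 + (x-1) * (ε/4) := by
          rw [abs_mul, abs_of_nonneg (by linarith : (0:ℝ) ≤ x - 1)]
          have h3 : |I01 - Ufn (logSet A)| ≤ 3 := by
            rw [abs_le] at hc ⊢
            constructor <;> linarith
          have h4 : (x-1) * |σ - Ufn (logSet A)| ≤ (x-1) * (ε/4) :=
            mul_le_mul_of_nonneg_left hσc (by linarith)
          linarith
  calc (1/x) * |(I01 - Ufn (logSet A)) + (x-1) * (σ - Ufn (logSet A))|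
      ≤ (1/x) * (3 + (x-1) * (ε/4)) := mul_le_mul_of_nonneg_left habs (by positivity)
    _ ≤ (1/x) * (3 + x * (ε/4)) := by
        apply mul_le_mul_of_nonneg_left _ (by positivity)
        nlinarith
    _ = 3/x + ε/4 := by field_simp
    _ < ε := by
        have h12 : 3/x ≤ ε/4 := by
          rw [div_le_iff₀ hx0]
          have : 12/ε ≤ x := hx2
          rw [div_le_iff₀ hε] at this
          nlinarith
        linarith

lemma xi_tendsto {A : Set ℝ} (hA : A ∈ Auni) {s f : ℕ → ℝ} (hsf : memP s f) :
    Tendsto (fun n => xi A (s n) (f n)) atTop (𝓝 (Ufn (logSet A))) := by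
  obtain ⟨hs1, hs, hf1⟩ := hsf
  rw [Metric.tendsto_atTop]
  intro ε hε
  obtain ⟨T0, hT01, hT0⟩ := sigma_unif hA (show 0 < ε/4 by linarith)
  have hlog : Tendsto (fun n => Real.log (s n)) atTop atTop :=
    Real.tendsto_log_atTop.comp hs
  obtain ⟨N, hN⟩ := eventually_atTop.1 (hlog.eventually_ge_atTop (max T0 (8/ε)))
  refine ⟨N, fun n hn => ?_⟩
  have hTn : max T0 (8/ε) ≤ Real.log (s n) := hN n hn
  have hT : T0 ≤ Real.log (s n) := le_trans (le_max_left _ _) hTn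
  have hT8 : 8/ε ≤ Real.log (s n) := le_trans (le_max_right _ _) hTn
  have hTpos : 0 < Real.log (s n) := by linarith
  have hy : 0 < Real.log (f n) := Real.log_pos (hf1 n)
  have hxieq := xi_eq hA.1 (hs1 n) (hf1 n)
  have h1 := sigma_sub_psi hA.1 (T := Real.log (s n)) (y := Real.log (f n)) hTpos hy.le
  have h2 := hT0 (Real.log (s n)) hT (Real.log (f n)) hy
  have h2T : 2/(Real.log (s n)) ≤ ε/4 := by
    rw [div_le_iff₀ hTpos]
    rw [div_le_iff₀ hε] at hT8
    nlinarith
  rw [Real.dist_eq, hxieq]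
  have habs : |(1 / Real.log (s n)) *
      (∫ u in Real.log (f n)..(Real.log (f n) + Real.log (s n)), gf A u) - Ufn (logSet A)|
      ≤ 2/(Real.log (s n)) + ε/4 := by
    have := abs_sub_comm (sigmaFn (logSet A) (Real.log (s n)) (Real.log (f n)))
      ((1 / Real.log (s n)) *
        ∫ u in Real.log (f n)..(Real.log (f n) + Real.log (s n)), gf A u)
    calc |(1 / Real.log (s n)) *
        (∫ u in Real.log (f n)..(Real.log (f n) + Real.log (s n)), gf A u) - Ufn (logSet A)|
        ≤ |(1 / Real.log (s n)) *
            (∫ u in Real.log (f n)..(Real.log (f n) + Real.log (s n)), gf A u)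
            - sigmaFn (logSet A) (Real.log (s n)) (Real.log (f n))|
          + |sigmaFn (logSet A) (Real.log (s n)) (Real.log (f n)) - Ufn (logSet A)| :=
            abs_sub_le _ _ _
      _ ≤ 2/(Real.log (s n)) + ε/4 := by
            rw [this] at h1
            exact add_le_add h1 h2
  calc |(1 / Real.log (s n)) *
      (∫ u in Real.log (f n)..(Real.log (f n) + Real.log (s n)), gf A u) - Ufn (logSet A)|
      ≤ 2/(Real.log (s n)) + ε/4 := habs
    _ ≤ ε/4 + ε/4 := by linarith
    _ < ε := by linarith

end Aux4
section Aux5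

lemma sup_sigma_nonneg {B : Set ℝ} (hB : B ∈ Mcal) {T : ℝ} (hT : 0 < T) :
    0 ≤ ⨆ x : Set.Ioi (0:ℝ), sigmaFn B T ↑x :=
  le_trans (sigma_nonneg hT) (le_sup_sigma hB hT ⟨1, Set.mem_Ioi.2 one_pos⟩)

lemma inf_sigma_le_one {B : Set ℝ} (hB : B ∈ Mcal) {T : ℝ} (hT : 0 < T) :
    (⨅ x : Set.Ioi (0:ℝ), sigmaFn B T ↑x) ≤ 1 :=
  le_trans (inf_le_sigma hT ⟨1, Set.mem_Ioi.2 one_pos⟩) (sigma_le_one hB hT)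

lemma exists_seq_limsup {F : ℝ → ℝ} {U : ℝ}
    (hbd : ∀ᶠ T in (atTop : Filter ℝ), F T ≤ 1)
    (hbd' : ∀ᶠ T in (atTop : Filter ℝ), 0 ≤ F T)
    (hU : limsup F atTop = U) :
    ∀ n : ℕ, ∃ T : ℝ, ((n:ℝ)+1 ≤ T ∧ |F T - U| ≤ 1/((n:ℝ)+1)) := by
  intro n
  have hε : (0:ℝ) < 1/((n:ℝ)+1) := by positivity
  have h1 : ∀ᶠ T in (atTop : Filter ℝ), F T < U + 1/((n:ℝ)+1) :=
    eventually_lt_of_limsup_lt (by rw [hU]; linarith)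
      (isBoundedUnder_of_eventually_le hbd)
  have h2 : ∃ᶠ T in (atTop : Filter ℝ), U - 1/((n:ℝ)+1) < F T :=
    frequently_lt_of_lt_limsup
      ((isBoundedUnder_of_eventually_ge hbd').isCoboundedUnder_le)
      (by rw [hU]; linarith)
  obtain ⟨T, hTa, hTb, hTc⟩ := (h2.and_eventually (h1.and (eventually_ge_atTop ((n:ℝ)+1)))).exists
  exact ⟨T, hTc, by rw [abs_le]; constructor <;> linarith⟩

lemma exists_seq_liminf {F : ℝ → ℝ} {L : ℝ}
    (hbd : ∀ᶠ T in (atTop : Filter ℝ), F T ≤ 1)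
    (hbd' : ∀ᶠ T in (atTop : Filter ℝ), 0 ≤ F T)
    (hL : liminf F atTop = L) :
    ∀ n : ℕ, ∃ T : ℝ, ((n:ℝ)+1 ≤ T ∧ |F T - L| ≤ 1/((n:ℝ)+1)) := by
  intro n
  have hε : (0:ℝ) < 1/((n:ℝ)+1) := by positivity
  have h1 : ∀ᶠ T in (atTop : Filter ℝ), L - 1/((n:ℝ)+1) < F T :=
    eventually_lt_of_lt_liminf (by rw [hL]; linarith)
      (isBoundedUnder_of_eventually_ge hbd')
  have h2 : ∃ᶠ T in (atTop : Filter ℝ), F T < L + 1/((n:ℝ)+1) :=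
    frequently_lt_of_liminf_lt
      ((isBoundedUnder_of_eventually_le hbd).isCoboundedUnder_ge)
      (by rw [hL]; linarith)
  obtain ⟨T, hTa, hTb, hTc⟩ := (h2.and_eventually (h1.and (eventually_ge_atTop ((n:ℝ)+1)))).exists
  exact ⟨T, hTc, by rw [abs_le]; constructor <;> linarith⟩

lemma interleave_tendsto_atTop {s1 s2 : ℕ → ℝ} (h1 : Tendsto s1 atTop atTop)
    (h2 : Tendsto s2 atTop atTop) :
    Tendsto (fun n => if Even n then s1 (n/2) else s2 (n/2)) atTop atTop := by
  rw [tendsto_atTop]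
  intro b
  obtain ⟨N1, hN1⟩ := eventually_atTop.1 (tendsto_atTop.1 h1 b)
  obtain ⟨N2, hN2⟩ := eventually_atTop.1 (tendsto_atTop.1 h2 b)
  rw [eventually_atTop]
  refine ⟨2 * max N1 N2, fun n hn => ?_⟩
  have hdiv : max N1 N2 ≤ n / 2 := by omega
  by_cases h : Even n
  · simp only [h, if_true]
    exact hN1 _ (le_trans (le_max_left _ _) hdiv)
  · simp only [h, if_false]
    exact hN2 _ (le_trans (le_max_right _ _) hdiv)

lemma four_div_tendsto_zero : Tendsto (fun n : ℕ => 4/((n:ℝ)+1)) atTop (𝓝 0) := by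
  have h := tendsto_one_div_add_atTop_nhds_zero_nat.const_mul (4:ℝ)
  rw [mul_zero] at h
  simpa [div_eq_mul_inv] using h

/-- Build, from near-optimal witnesses, a `memP` pair whose `ξ` sequence tends to the
given value. -/
lemma build_pair {A : Set ℝ} (hM : A ∈ Mcal) {c : ℝ} {T : ℕ → ℝ} {y : ℕ → ℝ}
    (hT1 : ∀ n : ℕ, (n:ℝ)+1 ≤ T n) (hy : ∀ n, 0 < y n)
    (hclose : ∀ n, |sigmaFn (logSet A) (T n) (y n) - c| ≤ 2/((n:ℝ)+1)) :
    ∃ s f : ℕ → ℝ, memP s f ∧ Tendsto (fun n => xi A (s n) (f n)) atTop (𝓝 c) := by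
  have hTpos : ∀ n, (0:ℝ) < T n := fun n => lt_of_lt_of_le (by positivity) (hT1 n)
  have hs1 : ∀ n, 1 < Real.exp (T n) := by
    intro n
    have h := Real.exp_lt_exp.2 (hTpos n)
    rwa [Real.exp_zero] at h
  have hf1 : ∀ n, 1 < Real.exp (y n) := by
    intro n
    have h := Real.exp_lt_exp.2 (hy n)
    rwa [Real.exp_zero] at h
  have hTtop : Tendsto T atTop atTop :=
    tendsto_atTop_mono hT1
      (tendsto_atTop_add_const_right _ _ tendsto_natCast_atTop_atTop)
  refine ⟨fun n => Real.exp (T n), fun n => Real.exp (y n),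
    ⟨hs1, Real.tendsto_exp_atTop.comp hTtop, hf1⟩, ?_⟩
  have hbound : ∀ n : ℕ,
      ‖xi A (Real.exp (T n)) (Real.exp (y n)) - c‖ ≤ 4/((n:ℝ)+1) := by
    intro n
    have hxieq := xi_eq hM (hs1 n) (hf1 n)
    rw [Real.log_exp, Real.log_exp] at hxieq
    have hps := sigma_sub_psi hM (hTpos n) (hy n).le
    have h2T : 2/(T n) ≤ 2/((n:ℝ)+1) :=
      div_le_div_of_nonneg_left (by norm_num) (by positivity) (hT1 n)
    rw [Real.norm_eq_abs, hxieq]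
    have hcomm := abs_sub_comm (sigmaFn (logSet A) (T n) (y n))
      ((1/(T n)) * ∫ u in (y n)..(y n + T n), gf A u)
    rw [hcomm] at hps
    calc |(1/(T n)) * (∫ u in (y n)..(y n + T n), gf A u) - c|
        ≤ |(1/(T n)) * (∫ u in (y n)..(y n + T n), gf A u)
            - sigmaFn (logSet A) (T n) (y n)|
          + |sigmaFn (logSet A) (T n) (y n) - c| := abs_sub_le _ _ _
      _ ≤ 2/((n:ℝ)+1) + 2/((n:ℝ)+1) := add_le_add (le_trans hps h2T) (hclose n)
      _ = 4/((n:ℝ)+1) := by ring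
  rw [← tendsto_sub_nhds_zero_iff]
  exact squeeze_zero_norm hbound four_div_tendsto_zero

end Aux5
section Aux6

/-- interleaving of two sequences -/
def ileave (a b : ℕ → ℝ) (n : ℕ) : ℝ := if Even n then a (n/2) else b (n/2)

lemma ileave_even (a b : ℕ → ℝ) (k : ℕ) : ileave a b (2*k) = a k := by
  unfold ileave
  rw [if_pos ⟨k, two_mul k⟩]
  congr 1
  omega

lemma ileave_odd (a b : ℕ → ℝ) (k : ℕ) : ileave a b (2*k+1) = b k := by
  unfold ileave
  rw [if_neg (by rintro ⟨r, hr⟩; omega)]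
  congr 1
  omega

lemma ileave_memP {a b fa fb : ℕ → ℝ} (ha : memP a fa) (hb : memP b fb) :
    memP (ileave a b) (ileave fa fb) := by
  refine ⟨fun n => ?_, ?_, fun n => ?_⟩
  · unfold ileave; split
    · exact ha.1 _
    · exact hb.1 _
  · exact interleave_tendsto_atTop ha.2.1 hb.2.1
  · unfold ileave; split
    · exact ha.2.2 _
    · exact hb.2.2 _

lemma converse {A : Set ℝ} (hM : A ∈ Mcal)
    (H : ∀ s f : ℕ → ℝ, memP s f → ∃ l, Tendsto (fun n => xi A (s n) (f n)) atTop (𝓝 l)) :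
    Lfn (logSet A) = Ufn (logSet A) := by
  have hBM := logSet_mem_Mcal hM
  have hbdS1 : ∀ᶠ T in (atTop : Filter ℝ),
      (⨆ x : Set.Ioi (0:ℝ), sigmaFn (logSet A) T ↑x) ≤ 1 := by
    filter_upwards [eventually_gt_atTop (0:ℝ)] with T hT
    exact sup_sigma_le_one hBM hT
  have hbdS0 : ∀ᶠ T in (atTop : Filter ℝ),
      (0:ℝ) ≤ ⨆ x : Set.Ioi (0:ℝ), sigmaFn (logSet A) T ↑x := by
    filter_upwards [eventually_gt_atTop (0:ℝ)] with T hT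
    exact sup_sigma_nonneg hBM hT
  have hbdI1 : ∀ᶠ T in (atTop : Filter ℝ),
      (⨅ x : Set.Ioi (0:ℝ), sigmaFn (logSet A) T ↑x) ≤ 1 := by
    filter_upwards [eventually_gt_atTop (0:ℝ)] with T hT
    exact inf_sigma_le_one hBM hT
  have hbdI0 : ∀ᶠ T in (atTop : Filter ℝ),
      (0:ℝ) ≤ ⨅ x : Set.Ioi (0:ℝ), sigmaFn (logSet A) T ↑x := by
    filter_upwards [eventually_gt_atTop (0:ℝ)] with T hT
    exact inf_sigma_nonneg hT
  -- sequence achieving U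
  choose TU hTU1 hTU2 using exists_seq_limsup hbdS1 hbdS0
    (rfl : limsup (fun T => ⨆ x : Set.Ioi (0:ℝ), sigmaFn (logSet A) T ↑x) atTop
      = Ufn (logSet A))
  have hTUpos : ∀ n, (0:ℝ) < TU n := fun n => lt_of_lt_of_le (by positivity) (hTU1 n)
  have hyU : ∀ n : ℕ, ∃ x : Set.Ioi (0:ℝ),
      (⨆ z : Set.Ioi (0:ℝ), sigmaFn (logSet A) (TU n) ↑z) - 1/((n:ℝ)+1)
        < sigmaFn (logSet A) (TU n) ↑x := by
    intro n
    apply exists_lt_of_lt_ciSup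
    have h : (0:ℝ) < 1/((n:ℝ)+1) := by positivity
    linarith
  choose yU hyU' using hyU
  have hcloseU : ∀ n : ℕ,
      |sigmaFn (logSet A) (TU n) ↑(yU n) - Ufn (logSet A)| ≤ 2/((n:ℝ)+1) := by
    intro n
    have hle := le_sup_sigma hBM (hTUpos n) (yU n)
    have hlt := hyU' n
    have h2 := hTU2 n
    unfold Ufn
    have hhalf : 2/((n:ℝ)+1) = 1/((n:ℝ)+1) + 1/((n:ℝ)+1) := by ring
    rw [abs_le] at h2 ⊢
    constructor <;> linarith [h2.1, h2.2]
  obtain ⟨s1, f1, hm1, hl1⟩ := build_pair hM (y := fun n => ((yU n : ℝ))) hTU1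
    (fun n => Set.mem_Ioi.1 (yU n).2) hcloseU
  -- sequence achieving L
  choose TL hTL1 hTL2 using exists_seq_liminf hbdI1 hbdI0
    (rfl : liminf (fun T => ⨅ x : Set.Ioi (0:ℝ), sigmaFn (logSet A) T ↑x) atTop
      = Lfn (logSet A))
  have hTLpos : ∀ n, (0:ℝ) < TL n := fun n => lt_of_lt_of_le (by positivity) (hTL1 n)
  have hyL : ∀ n : ℕ, ∃ x : Set.Ioi (0:ℝ),
      sigmaFn (logSet A) (TL n) ↑x
        < (⨅ z : Set.Ioi (0:ℝ), sigmaFn (logSet A) (TL n) ↑z) + 1/((n:ℝ)+1) := by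
    intro n
    apply exists_lt_of_ciInf_lt
    have h : (0:ℝ) < 1/((n:ℝ)+1) := by positivity
    linarith
  choose yL hyL' using hyL
  have hcloseL : ∀ n : ℕ,
      |sigmaFn (logSet A) (TL n) ↑(yL n) - Lfn (logSet A)| ≤ 2/((n:ℝ)+1) := by
    intro n
    have hge := inf_le_sigma (B := logSet A) (hTLpos n) (yL n)
    have hlt := hyL' n
    have h2 := hTL2 n
    unfold Lfn
    have hhalf : 2/((n:ℝ)+1) = 1/((n:ℝ)+1) + 1/((n:ℝ)+1) := by ring
    rw [abs_le] at h2 ⊢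
    constructor <;> linarith [h2.1, h2.2]
  obtain ⟨s2, f2, hm2, hl2⟩ := build_pair hM (y := fun n => ((yL n : ℝ))) hTL1
    (fun n => Set.mem_Ioi.1 (yL n).2) hcloseL
  -- interleave
  obtain ⟨l, hl⟩ := H (ileave s1 s2) (ileave f1 f2) (ileave_memP hm1 hm2)
  have htwo : Tendsto (fun k : ℕ => 2*k) atTop atTop :=
    tendsto_atTop_mono (fun k => by simp only [id_eq]; omega) tendsto_id
  have htwo1 : Tendsto (fun k : ℕ => 2*k+1) atTop atTop :=
    tendsto_atTop_mono (fun k => by simp only [id_eq]; omega) tendsto_id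
  have h_even := hl.comp htwo
  have h_odd := hl.comp htwo1
  have heq1 : ((fun n => xi A (ileave s1 s2 n) (ileave f1 f2 n)) ∘ fun k : ℕ => 2*k)
      = fun k => xi A (s1 k) (f1 k) := by
    funext k
    simp only [Function.comp_apply, ileave_even]
  have heq2 : ((fun n => xi A (ileave s1 s2 n) (ileave f1 f2 n)) ∘ fun k : ℕ => 2*k+1)
      = fun k => xi A (s2 k) (f2 k) := by
    funext k
    simp only [Function.comp_apply, ileave_odd]
  rw [heq1] at h_even
  rw [heq2] at h_odd
  have hU : Ufn (logSet A) = l := tendsto_nhds_unique hl1 h_even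
  have hL : Lfn (logSet A) = l := tendsto_nhds_unique hl2 h_odd
  rw [hU, hL]

end Aux6

/-- Alternate representation: `𝓐^uni = ⋂_{(s,f)∈𝓟} 𝓐^{s,f}`, and for every
`(s,f) ∈ 𝓟` and `A ∈ 𝓐^uni`, `α(A) = α^{s,f}(A)`. -/
theorem stmt9 :
    (∀ A : Set ℝ, A ∈ Auni ↔ ∀ s f : ℕ → ℝ, memP s f → A ∈ Asf s f) ∧
    (∀ s f : ℕ → ℝ, memP s f → ∀ A ∈ Auni, alphaFn A = alphasf s f A) := by
  constructor
  · intro A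
    constructor
    · intro hA s f hsf
      exact ⟨hA.1, Ufn (logSet A), xi_tendsto hA hsf⟩
    · intro H
      have hsample : memP (fun n : ℕ => (n:ℝ)+2) (fun _ => (2:ℝ)) := by
        refine ⟨fun n => ?_, tendsto_atTop_add_const_right _ _ tendsto_natCast_atTop_atTop,
          fun _ => one_lt_two⟩
        have h := Nat.cast_nonneg (α := ℝ) n
        show (1:ℝ) < (n:ℝ) + 2
        linarith
      have hM : A ∈ Mcal := (H _ _ hsample).1
      exact ⟨hM, logSet_mem_Mcal hM, converse hM (fun s f hsf => (H s f hsf).2)⟩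
  · intro s f hsf A hA
    have h1 := rho_tendsto hA
    have h2 := xi_tendsto hA hsf
    unfold alphaFn lam alphasf
    rw [h1.limUnder_eq, h2.limUnder_eq]
end UPN
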